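/- Let j : ℝ × ℝ → ℝ be differentiable and let ψ₁, ψ₂ : ℝ × ℝ → ℝ satisfy ∂j/∂t (t,s) = ψ₁(t,s) and ∂j/∂s (t,s) = ψ₂(t,s)·s for all (t,s) with s > 0. Define F on the real vector space of symmetric 2×2 matrices by F(A) := j(tr A, |dev A|). Then at every real symmetric 2×2 matrix A with dev A ≠ 0, F is Fréchet differentiable and its derivative in the direction of a symmetric 2×2 matrix B is F′(A)(B) = ψ₁(tr A, |dev A|)·tr B + ψ₂(tr A, |dev A|)·(1/2)·tr((dev A)·(dev B)). -/

import Mathlib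

open Matrix

noncomputable section

attribute [local instance] Matrix.normedAddCommGroup Matrix.normedSpace

/-- The deviatoric (trace-free) part of a 2×2 real matrix: `dev A = A - (1/2)(tr A)·I`. -/
def dev (A : Matrix (Fin 2) (Fin 2) ℝ) : Matrix (Fin 2) (Fin 2) ℝ :=
  A - ((1 / 2) * A.trace) • (1 : Matrix (Fin 2) (Fin 2) ℝ)

/-- The invariant `|A| = √((1/2)·tr(A²))`. -/
def tnorm (A : Matrix (Fin 2) (Fin 2) ℝ) : ℝ :=
  Real.sqrt ((1 / 2) * (A * A).trace)

/-- The real vector space of symmetric 2×2 matrices, as a submodule of all 2×2 matrices. -/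
def SymMat : Submodule ℝ (Matrix (Fin 2) (Fin 2) ℝ) where
  carrier := {A | A.IsSymm}
  add_mem' := fun ha hb => ha.add hb
  zero_mem' := Matrix.isSymm_zero
  smul_mem' := fun c _ ha => by
    simpa [Matrix.IsSymm, Matrix.transpose_smul] using congrArg (c • ·) ha

abbrev M2 := Matrix (Fin 2) (Fin 2) ℝ

def devL : M2 →ₗ[ℝ] M2 where
  toFun := dev
  map_add' A B := by
    simp only [dev, Matrix.trace_add, mul_add, add_smul]
    abel
  map_smul' c A := by
    simp only [dev, Matrix.trace_smul, RingHom.id_apply, smul_sub, smul_smul, smul_eq_mul]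
    ring_nf

def devC : M2 →L[ℝ] M2 := LinearMap.toContinuousLinearMap devL

def trb2 : M2 →ₗ[ℝ] M2 →ₗ[ℝ] ℝ :=
  LinearMap.mk₂ ℝ (fun U V => (U * V).trace)
    (fun U U' V => by simp [add_mul, Matrix.trace_add])
    (fun c U V => by simp [Matrix.smul_mul, Matrix.trace_smul])
    (fun U V V' => by simp [mul_add, Matrix.trace_add])
    (fun c U V => by simp [Matrix.mul_smul, Matrix.trace_smul])

def trbC : M2 →L[ℝ] M2 →L[ℝ] ℝ :=
  LinearMap.toContinuousLinearMap
    (((LinearMap.toContinuousLinearMap :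
        (M2 →ₗ[ℝ] ℝ) ≃ₗ[ℝ] (M2 →L[ℝ] ℝ)).toLinearMap).comp trb2)

@[simp] lemma devC_apply (X : M2) : devC X = dev X := rfl
@[simp] lemma trbC_apply (U V : M2) : trbC U V = (U * V).trace := rfl

lemma dev_isSymm {A : M2} (hA : A.IsSymm) : (dev A).IsSymm := by
  unfold dev Matrix.IsSymm at *
  rw [Matrix.transpose_sub, Matrix.transpose_smul, Matrix.transpose_one, hA]

lemma trace_sq_pos {S : M2} (hS : S.IsSymm) (h : S ≠ 0) : 0 < (S * S).trace := by
  have hdiag : (S * S).trace = ∑ p : Fin 2 × Fin 2, (S p.1 p.2) ^ 2 := by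
    rw [Fintype.sum_prod_type]
    simp only [Matrix.trace, Matrix.diag, Matrix.mul_apply, sq]
    refine Finset.sum_congr rfl fun i _ => Finset.sum_congr rfl fun j _ => ?_
    rw [show S j i = S i j from congrFun (congrFun hS i) j]
  obtain ⟨i, j, hij⟩ : ∃ i j, S i j ≠ 0 := by
    by_contra hc
    push_neg at hc
    exact h (Matrix.ext fun i j => hc i j)
  rw [hdiag]
  exact Finset.sum_pos' (fun _ _ => sq_nonneg _)
    ⟨(i, j), Finset.mem_univ _, by positivity⟩

set_option maxHeartbeats 1000000 in
/-- If `j` is a differentiable potential of dissipation whose partial derivatives on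
`{s > 0}` are `∂j/∂t = ψ₁` and `∂j/∂s = ψ₂(t,s)·s`, then `F(A) := j(tr A, |dev A|)` is
Fréchet differentiable on the space of symmetric 2×2 matrices at every `A` with
`dev A ≠ 0`, with derivative
`F′(A)(B) = ψ₁(tr A, |dev A|)·tr B + ψ₂(tr A, |dev A|)·(1/2)·tr((dev A)·(dev B))`. -/
theorem potential_frechet_derivative (j : ℝ × ℝ → ℝ) (hj : Differentiable ℝ j)
    (ψ₁ ψ₂ : ℝ → ℝ → ℝ)
    (hj₁ : ∀ t s : ℝ, 0 < s → fderiv ℝ j (t, s) (1, 0) = ψ₁ t s)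
    (hj₂ : ∀ t s : ℝ, 0 < s → fderiv ℝ j (t, s) (0, 1) = ψ₂ t s * s)
    (A : SymMat) (hA : dev (A : Matrix (Fin 2) (Fin 2) ℝ) ≠ 0) :
    ∃ L : SymMat →L[ℝ] ℝ,
      HasFDerivAt
        (fun X : SymMat =>
          j ((X : Matrix (Fin 2) (Fin 2) ℝ).trace, tnorm (dev (X : Matrix (Fin 2) (Fin 2) ℝ))))
        L A ∧
      ∀ B : SymMat,
        L B =
          ψ₁ (A : Matrix (Fin 2) (Fin 2) ℝ).trace (tnorm (dev (A : Matrix (Fin 2) (Fin 2) ℝ))) *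
              (B : Matrix (Fin 2) (Fin 2) ℝ).trace +
            ψ₂ (A : Matrix (Fin 2) (Fin 2) ℝ).trace (tnorm (dev (A : Matrix (Fin 2) (Fin 2) ℝ))) *
              ((1 / 2) *
                (dev (A : Matrix (Fin 2) (Fin 2) ℝ) * dev (B : Matrix (Fin 2) (Fin 2) ℝ)).trace) := by
  classical
  have hAsymm : (A : M2).IsSymm := A.2
  have hSsymm : (dev (A : M2)).IsSymm := dev_isSymm hAsymm
  have htrpos : 0 < (dev (A : M2) * dev (A : M2)).trace := trace_sq_pos hSsymm hA
  have hqpos : 0 < (1 / 2 : ℝ) * (dev (A : M2) * dev (A : M2)).trace := by linarith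
  have hspos : 0 < tnorm (dev (A : M2)) := Real.sqrt_pos.mpr hqpos
  -- continuous linear maps
  set dC : SymMat →L[ℝ] M2 := devC.comp SymMat.subtypeL with hdC_def
  set trC : SymMat →L[ℝ] ℝ :=
    (LinearMap.toContinuousLinearMap (Matrix.traceLinearMap (Fin 2) ℝ ℝ)).comp
      SymMat.subtypeL with htrC_def
  have dC_apply : ∀ X : SymMat, dC X = dev (X : M2) := fun _ => rfl
  have trC_apply : ∀ X : SymMat, trC X = (X : M2).trace := fun _ => rfl
  -- derivative of the quadratic form q X = (1/2) * tr(dev X * dev X)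
  have hbb := trbC.isBoundedBilinearMap
  have hpair : HasFDerivAt (fun X : SymMat => (dC X, dC X)) (dC.prod dC) A :=
    HasFDerivAt.prodMk (dC.hasFDerivAt) (dC.hasFDerivAt)
  have h1 : HasFDerivAt (fun X : SymMat => trbC (dC X) (dC X))
      ((hbb.deriv (dC A, dC A)).comp (dC.prod dC)) A :=
    ((hbb.hasFDerivAt (dC A, dC A)).comp A hpair :)
  have hq : HasFDerivAt (fun X : SymMat => (1 / 2 : ℝ) * trbC (dC X) (dC X))
      ((1 / 2 : ℝ) • ((hbb.deriv (dC A, dC A)).comp (dC.prod dC))) A :=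
    (h1.const_mul _ :)
  -- derivative of sqrt composed with q
  have hqA_ne : (1 / 2 : ℝ) * trbC (dC A) (dC A) ≠ 0 := ne_of_gt hqpos
  have hsqrt : HasFDerivAt
      (fun X : SymMat => Real.sqrt ((1 / 2 : ℝ) * trbC (dC X) (dC X)))
      ((1 / (2 * Real.sqrt ((1 / 2 : ℝ) * trbC (dC A) (dC A)))) •
        ((1 / 2 : ℝ) • ((hbb.deriv (dC A, dC A)).comp (dC.prod dC)))) A :=
    ((Real.hasDerivAt_sqrt hqA_ne).comp_hasFDerivAt A hq :)
  -- the pair map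
  have hg : HasFDerivAt
      (fun X : SymMat => (trC X, Real.sqrt ((1 / 2 : ℝ) * trbC (dC X) (dC X))))
      (trC.prod ((1 / (2 * Real.sqrt ((1 / 2 : ℝ) * trbC (dC A) (dC A)))) •
        ((1 / 2 : ℝ) • ((hbb.deriv (dC A, dC A)).comp (dC.prod dC))))) A :=
    (HasFDerivAt.prodMk (trC.hasFDerivAt) hsqrt :)
  -- chain rule
  have hF := ((hj _).hasFDerivAt).comp A hg
  refine ⟨_, hF, fun B => ?_⟩
  have hpA : (trC A, Real.sqrt ((1 / 2 : ℝ) * trbC (dC A) (dC A))) =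
      ((A : M2).trace, tnorm (dev (A : M2))) := rfl
  simp only [ContinuousLinearMap.coe_comp', Function.comp_apply,
    ContinuousLinearMap.prod_apply, ContinuousLinearMap.smul_apply,
    IsBoundedBilinearMap.deriv_apply, hpA, smul_eq_mul]
  have hsplit : ∀ u v : ℝ,
      fderiv ℝ j ((A : M2).trace, tnorm (dev (A : M2))) (u, v) =
        u * ψ₁ (A : M2).trace (tnorm (dev (A : M2))) +
        v * (ψ₂ (A : M2).trace (tnorm (dev (A : M2))) * tnorm (dev (A : M2))) := by
    intro u v
    have h0 : ((u, v) : ℝ × ℝ) = u • ((1 : ℝ), (0 : ℝ)) + v • ((0 : ℝ), (1 : ℝ)) := by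
      simp [Prod.ext_iff]
    rw [h0, map_add, _root_.map_smul, _root_.map_smul, smul_eq_mul, smul_eq_mul,
      hj₁ _ _ hspos, hj₂ _ _ hspos]
  show fderiv ℝ j ((A : M2).trace, tnorm (dev (A : M2)))
      (trC B, (1 / (2 * Real.sqrt ((1 / 2 : ℝ) * trbC (dC A) (dC A)))) *
        ((1 / 2 : ℝ) * (trbC (dC A) (dC B) + trbC (dC B) (dC A)))) = _
  rw [hsplit]
  have hv : trbC (dC A) (dC B) + trbC (dC B) (dC A) =
      2 * (dev (A : M2) * dev (B : M2)).trace := by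
    rw [trbC_apply, trbC_apply, dC_apply, dC_apply, Matrix.trace_mul_comm]
    ring
  have hs' : Real.sqrt ((1 / 2 : ℝ) * trbC (dC A) (dC A)) = tnorm (dev (A : M2)) := rfl
  rw [trC_apply, hv, hs']
  have hsne : tnorm (dev (A : M2)) ≠ 0 := ne_of_gt hspos
  field_simp
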